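/- Let y : [0,T] → [0,∞) be absolutely continuous and satisfy y'(t) + a(t) ≤ c y(t)³ a.e. with a(t) ≥ 0 measurable. Then for the function 1/(1+y(t)): 1/(1+y(0)) − 1/(1+y(T)) + ∫₀ᵀ a(t)/(1+y(t))² dt ≤ c ∫₀ᵀ y(t) dt. -/

import Mathlib

open MeasureTheory

/-- if `y ≥ 0` is absolutely continuous with `y' + a ≤ c y³` a.e. and
`a ≥ 0`, then `1/(1+y(0)) − 1/(1+y(T)) + ∫₀ᵀ a/(1+y)² ≤ c ∫₀ᵀ y`. -/
theorem stmt5 (T c : ℝ) (hT : 0 < T) (hc : 0 ≤ c)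
    (y y' a : ℝ → ℝ)
    (hy0 : ∀ t ∈ Set.Icc 0 T, 0 ≤ y t)
    (hy' : ∀ t ∈ Set.Icc 0 T, HasDerivAt y (y' t) t)
    (hy'int : IntegrableOn y' (Set.Icc 0 T))
    (hyint : IntegrableOn y (Set.Icc 0 T))
    (ham : Measurable a) (ha0 : ∀ t, 0 ≤ a t)
    (haint : IntegrableOn (fun t => a t / (1 + y t) ^ 2) (Set.Icc 0 T))
    (hineq : ∀ᵐ t ∂(volume.restrict (Set.Icc 0 T)), y' t + a t ≤ c * y t ^ 3) :
    1 / (1 + y 0) - 1 / (1 + y T) +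
      (∫ t in Set.Icc 0 T, a t / (1 + y t) ^ 2) ≤ c * ∫ t in Set.Icc 0 T, y t := by
  have hpos : ∀ t ∈ Set.Icc (0:ℝ) T, 0 < 1 + y t := fun t ht => by linarith [hy0 t ht]
  have hycont : ContinuousOn y (Set.Icc 0 T) := fun t ht =>
    (hy' t ht).continuousAt.continuousWithinAt
  -- derivative of g = (1 + y)⁻¹
  have hg' : ∀ t ∈ Set.Icc (0:ℝ) T,
      HasDerivAt (fun s => (1 + y s)⁻¹) (-(y' t) / (1 + y t) ^ 2) t := by
    intro t ht
    exact ((((hasDerivAt_const t (1:ℝ)).add (hy' t ht)).inv (hpos t ht).ne').congr_deriv (by simp))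
  -- integrability of the derivative
  have hgmeas : AEStronglyMeasurable (fun t => -(y' t) / (1 + y t) ^ 2)
      (volume.restrict (Set.Icc 0 T)) := by
    have h1 : AEStronglyMeasurable y' (volume.restrict (Set.Icc 0 T)) :=
      hy'int.aestronglyMeasurable
    have h2 : AEStronglyMeasurable y (volume.restrict (Set.Icc 0 T)) :=
      hyint.aestronglyMeasurable
    exact (h1.aemeasurable.neg.div ((aemeasurable_const.add h2.aemeasurable).pow_const 2)).aestronglyMeasurable
  have hbound : ∀ᵐ t ∂(volume.restrict (Set.Icc 0 T)),
      ‖-(y' t) / (1 + y t) ^ 2‖ ≤ ‖y' t‖ := by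
    filter_upwards [ae_restrict_mem measurableSet_Icc] with t ht
    have h1 : (1:ℝ) ≤ (1 + y t) ^ 2 := by nlinarith [hy0 t ht]
    rw [norm_div, norm_neg, Real.norm_of_nonneg (sq_nonneg _)]
    exact div_le_self (norm_nonneg _) h1
  have hgint : IntegrableOn (fun t => -(y' t) / (1 + y t) ^ 2) (Set.Icc 0 T) :=
    Integrable.mono hy'int hgmeas hbound
  -- FTC
  have hftc : ∫ t in (0:ℝ)..T, -(y' t) / (1 + y t) ^ 2
      = (1 + y T)⁻¹ - (1 + y 0)⁻¹ := by
    apply intervalIntegral.integral_eq_sub_of_hasDerivAt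
    · intro t ht
      rw [Set.uIcc_of_le hT.le] at ht
      exact hg' t ht
    · rw [intervalIntegrable_iff_integrableOn_Icc_of_le hT.le]
      exact hgint
  have hIccIoc : ∀ f : ℝ → ℝ, ∫ t in Set.Icc (0:ℝ) T, f t = ∫ t in (0:ℝ)..T, f t := by
    intro f
    rw [intervalIntegral.integral_of_le hT.le, MeasureTheory.integral_Icc_eq_integral_Ioc]
  have key : 1 / (1 + y 0) - 1 / (1 + y T) = ∫ t in Set.Icc (0:ℝ) T, y' t / (1 + y t) ^ 2 := by
    have : ∫ t in Set.Icc (0:ℝ) T, y' t / (1 + y t) ^ 2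
        = -∫ t in Set.Icc (0:ℝ) T, -(y' t) / (1 + y t) ^ 2 := by
      rw [← integral_neg]; congr 1; ext t; ring
    rw [this, hIccIoc, hftc]
    simp [one_div]
  rw [key]
  have hsum : (∫ t in Set.Icc (0:ℝ) T, y' t / (1 + y t) ^ 2)
      + (∫ t in Set.Icc (0:ℝ) T, a t / (1 + y t) ^ 2)
      = ∫ t in Set.Icc (0:ℝ) T, (y' t + a t) / (1 + y t) ^ 2 := by
    rw [← integral_add (by
        have he : (fun t => y' t / (1 + y t) ^ 2)
            = fun t => -(-y' t / (1 + y t) ^ 2) := by ext t; ring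
        rw [he]; exact hgint.neg) haint]
    congr 1; ext t; ring
  rw [hsum]
  have hcy : c * (∫ t in Set.Icc (0:ℝ) T, y t) = ∫ t in Set.Icc (0:ℝ) T, c * y t := by
    rw [integral_const_mul]
  rw [hcy]
  apply integral_mono_ae
  · have : (fun t => (y' t + a t) / (1 + y t) ^ 2)
        = fun t => -(y' t) / (1 + y t) ^ 2 * (-1) + a t / (1 + y t) ^ 2 := by
      ext t; ring
    rw [this]
    exact (hgint.mul_const _).add haint
  · exact hyint.const_mul c
  · filter_upwards [hineq, ae_restrict_mem measurableSet_Icc] with t h1 ht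
    have hy := hy0 t ht
    have hp : (0:ℝ) < (1 + y t) ^ 2 := by positivity
    rw [div_le_iff₀ hp]
    nlinarith [mul_nonneg hc hy, mul_nonneg hc (mul_nonneg hy hy)]
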